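/- Let 𝒞 be a variety of L-algebras, A ∈ 𝒞, B a subalgebra of A, W a term in a set S of variables, and x = (x_s)_{s∈S} an S-tuple of elements of A. Suppose T₁ and T₂ are disjoint subsets of S, and that both T₁ and T₁ ∪ T₂ are transferable over B with respect to W(x). Suppose further that for every proper subset U of T₁, either U or T₁ ∖ U is transferable over B with respect to W(x). Then T₂ is transferable over B with respect to W(x). -/
import Mathlib


open FirstOrder Language

universe u v w x

open Classical in
/-- Transferability of a set of variables. -/
def Transferable {L : FirstOrder.Language.{u, v}} (T : L.Theory) {A : Type w} [L.Structure A]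
    (B : L.Substructure A) {S : Type x} (W : L.Term S) (xs : S → A) (t : Set S) : Prop :=
  ∀ S₁ S₂ : Set S, Disjoint S₁ t → Disjoint S₁ S₂ → Disjoint t S₂ →
    S₁ ∪ t ∪ S₂ = Set.univ →
    ∀ (C : Type (max u v w)) [L.Structure C] [T.Model C], ∀ f g : A →[L] C,
      (∀ b ∈ B, f b = g b) →
      Term.realize (fun s => if s ∈ S₁ ∪ t then f (xs s) else g (xs s)) W =
      Term.realize (fun s => if s ∈ S₁ then f (xs s) else g (xs s)) W

/-- The dominion of a subalgebra `B` of `A` in the variety of models of `T`. -/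
def Dominion {L : FirstOrder.Language.{u, v}} (T : L.Theory) {A : Type w} [L.Structure A]
    (B : L.Substructure A) : Set A :=
  {a : A | ∀ (C : Type (max u v w)) [L.Structure C] [T.Model C], ∀ f g : A →[L] C,
    (∀ b ∈ B, f b = g b) → f a = g a}

set_option maxHeartbeats 2000000 in
/-- Suppose `T₁` and `T₂` are disjoint subsets of `S`, and both `T₁` and `T₁ ∪ T₂` are
transferable over `B` with respect to `W(x)`. Suppose further that for every proper
subset `U` of `T₁`, either `U` or `T₁ \ U` is transferable. Then `T₂` is
transferable over `B` with respect to `W(x)`. -/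
theorem transferable_of_disjoint_union {L : FirstOrder.Language.{u, v}} (T : L.Theory)
    {A : Type w} [L.Structure A] [T.Model A] (B : L.Substructure A) {S : Type x}
    (W : L.Term S) (xs : S → A) (T₁ T₂ : Set S)
    (hdisj : Disjoint T₁ T₂)
    (hT₁ : Transferable T B W xs T₁)
    (hT₁T₂ : Transferable T B W xs (T₁ ∪ T₂))
    (hsub : ∀ U : Set S, U ⊂ T₁ → Transferable T B W xs U ∨ Transferable T B W xs (T₁ \ U)) :
    Transferable T B W xs T₂ := by
  intro S₁ S₂ hd1 hd2 hd3 hcover C _ _ f g hfg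
  have m1 : ∀ s, s ∈ S₁ → s ∉ T₂ := fun s h => Set.disjoint_left.1 hd1 h
  have m2 : ∀ s, s ∈ S₁ → s ∉ S₂ := fun s h => Set.disjoint_left.1 hd2 h
  have m3 : ∀ s, s ∈ T₂ → s ∉ S₂ := fun s h => Set.disjoint_left.1 hd3 h
  have m4 : ∀ s, s ∈ T₁ → s ∉ T₂ := fun s h => Set.disjoint_left.1 hdisj h
  have mc : ∀ s, s ∈ S₁ ∨ s ∈ T₂ ∨ s ∈ S₂ := by
    intro s
    have : s ∈ S₁ ∪ T₂ ∪ S₂ := hcover.symm ▸ Set.mem_univ s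
    simpa [Set.mem_union, or_assoc] using this
  let R : Set S → C := fun X =>
    Term.realize (fun s => @ite _ (s ∈ X) (Classical.propDecidable _) (f (xs s)) (g (xs s))) W
  have hRext : ∀ X Y : Set S, X = Y → R X = R Y := fun X Y h => by rw [h]
  have norm : ∀ (X : Set S) (d : ∀ s : S, Decidable (s ∈ X)),
      Term.realize (fun s => @ite C (s ∈ X) (d s) (f (xs s)) (g (xs s))) W = R X := by
    intro X d
    have hd : d = fun s => Classical.propDecidable (s ∈ X) := Subsingleton.elim _ _
    rw [hd]
  refine (norm _ _).trans ?_
  show R (S₁ ∪ T₂) = R S₁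
  by_cases hsub2 : T₁ ⊆ S₂
  · -- T₁ entirely inside S₂
    have a1 : R ((S₁ ∪ T₂) ∪ T₁) = R (S₁ ∪ T₂) := by
      refine (norm _ _).symm.trans (hT₁ (S₁ ∪ T₂) (S₂ \ T₁) ?_ ?_ ?_ ?_ C f g hfg)
      · refine Set.disjoint_left.2 fun s hs hs' => ?_
        simp only [Set.mem_union] at hs
        have := m1 s; have := m2 s; have := m3 s; have := m4 s
        have := hsub2 hs'; tauto
      · refine Set.disjoint_left.2 fun s hs hs' => ?_
        simp only [Set.mem_union] at hs
        simp only [Set.mem_diff] at hs'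
        have := m2 s; have := m3 s; tauto
      · refine Set.disjoint_left.2 fun s hs hs' => ?_
        simp only [Set.mem_diff] at hs'; tauto
      · refine Set.eq_univ_iff_forall.2 fun s => ?_
        simp only [Set.mem_union, Set.mem_diff]
        have := mc s; tauto
    have a2 : R (S₁ ∪ (T₁ ∪ T₂)) = R S₁ := by
      refine (norm _ _).symm.trans (hT₁T₂ S₁ (S₂ \ T₁) ?_ ?_ ?_ ?_ C f g hfg)
      · refine Set.disjoint_left.2 fun s hs hs' => ?_
        simp only [Set.mem_union] at hs'
        have := m1 s; have := m2 s; have := hsub2; tauto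
      · refine Set.disjoint_left.2 fun s hs hs' => ?_
        simp only [Set.mem_diff] at hs'
        have := m2 s; tauto
      · refine Set.disjoint_left.2 fun s hs hs' => ?_
        simp only [Set.mem_union] at hs
        simp only [Set.mem_diff] at hs'
        have := m3 s; tauto
      · refine Set.eq_univ_iff_forall.2 fun s => ?_
        simp only [Set.mem_union, Set.mem_diff]
        have := mc s; tauto
    have e1 : (S₁ ∪ T₂) ∪ T₁ = S₁ ∪ (T₁ ∪ T₂) := by
      ext s; simp only [Set.mem_union]; tauto
    calc R (S₁ ∪ T₂) = R ((S₁ ∪ T₂) ∪ T₁) := a1.symm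
      _ = R (S₁ ∪ (T₁ ∪ T₂)) := hRext _ _ e1
      _ = R S₁ := a2
  · -- T₁ not contained in S₂; let U = T₁ ∩ S₂ ⊂ T₁
    have hUss : T₁ ∩ S₂ ⊂ T₁ := by
      refine ⟨Set.inter_subset_left, fun h => hsub2 fun s hs => ?_⟩
      exact (h hs).2
    -- facts used everywhere
    have b4 : R (((S₁ \ T₁) ∪ T₂) ∪ T₁) = R ((S₁ \ T₁) ∪ T₂) := by
      refine (norm _ _).symm.trans (hT₁ ((S₁ \ T₁) ∪ T₂) (S₂ \ T₁) ?_ ?_ ?_ ?_ C f g hfg)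
      · refine Set.disjoint_left.2 fun s hs hs' => ?_
        simp only [Set.mem_union, Set.mem_diff] at hs
        have := m4 s; tauto
      · refine Set.disjoint_left.2 fun s hs hs' => ?_
        simp only [Set.mem_union, Set.mem_diff] at hs
        simp only [Set.mem_diff] at hs'
        have := m2 s; have := m3 s; tauto
      · refine Set.disjoint_left.2 fun s hs hs' => ?_
        simp only [Set.mem_diff] at hs'; tauto
      · refine Set.eq_univ_iff_forall.2 fun s => ?_
        simp only [Set.mem_union, Set.mem_diff]
        have := mc s; tauto
    have b5 : R ((S₁ \ T₁) ∪ (T₁ ∪ T₂)) = R (S₁ \ T₁) := by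
      refine (norm _ _).symm.trans (hT₁T₂ (S₁ \ T₁) (S₂ \ T₁) ?_ ?_ ?_ ?_ C f g hfg)
      · refine Set.disjoint_left.2 fun s hs hs' => ?_
        simp only [Set.mem_diff] at hs
        simp only [Set.mem_union] at hs'
        have := m1 s; tauto
      · refine Set.disjoint_left.2 fun s hs hs' => ?_
        simp only [Set.mem_diff] at hs hs'
        have := m2 s; tauto
      · refine Set.disjoint_left.2 fun s hs hs' => ?_
        simp only [Set.mem_union] at hs
        simp only [Set.mem_diff] at hs'
        have := m3 s; tauto
      · refine Set.eq_univ_iff_forall.2 fun s => ?_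
        simp only [Set.mem_union, Set.mem_diff]
        have := mc s; tauto
    have e2 : ((S₁ \ T₁) ∪ T₂) ∪ T₁ = (S₁ \ T₁) ∪ (T₁ ∪ T₂) := by
      ext s; simp only [Set.mem_union, Set.mem_diff]; tauto
    have key : R ((S₁ \ T₁) ∪ T₂) = R (S₁ \ T₁) := by
      calc R ((S₁ \ T₁) ∪ T₂) = R (((S₁ \ T₁) ∪ T₂) ∪ T₁) := b4.symm
        _ = R ((S₁ \ T₁) ∪ (T₁ ∪ T₂)) := hRext _ _ e2
        _ = R (S₁ \ T₁) := b5
    rcases hsub (T₁ ∩ S₂) hUss with hU | hV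
    · -- U = T₁ ∩ S₂ is transferable
      have b1 : R ((S₁ ∪ T₂) ∪ (T₁ ∩ S₂)) = R (S₁ ∪ T₂) := by
        refine (norm _ _).symm.trans (hU (S₁ ∪ T₂) (S₂ \ T₁) ?_ ?_ ?_ ?_ C f g hfg)
        · refine Set.disjoint_left.2 fun s hs hs' => ?_
          simp only [Set.mem_union] at hs
          simp only [Set.mem_inter_iff] at hs'
          have := m2 s; have := m3 s; tauto
        · refine Set.disjoint_left.2 fun s hs hs' => ?_
          simp only [Set.mem_union] at hs
          simp only [Set.mem_diff] at hs'
          have := m2 s; have := m3 s; tauto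
        · refine Set.disjoint_left.2 fun s hs hs' => ?_
          simp only [Set.mem_inter_iff] at hs
          simp only [Set.mem_diff] at hs'; tauto
        · refine Set.eq_univ_iff_forall.2 fun s => ?_
          simp only [Set.mem_union, Set.mem_inter_iff, Set.mem_diff]
          have := mc s; tauto
      have b2 : R (S₁ ∪ (T₁ ∩ S₂)) = R S₁ := by
        refine (norm _ _).symm.trans (hU S₁ (T₂ ∪ (S₂ \ T₁)) ?_ ?_ ?_ ?_ C f g hfg)
        · refine Set.disjoint_left.2 fun s hs hs' => ?_
          simp only [Set.mem_inter_iff] at hs'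
          have := m2 s; tauto
        · refine Set.disjoint_left.2 fun s hs hs' => ?_
          simp only [Set.mem_union, Set.mem_diff] at hs'
          have := m1 s; have := m2 s; tauto
        · refine Set.disjoint_left.2 fun s hs hs' => ?_
          simp only [Set.mem_inter_iff] at hs
          simp only [Set.mem_union, Set.mem_diff] at hs'
          have := m3 s; have := m4 s; tauto
        · refine Set.eq_univ_iff_forall.2 fun s => ?_
          simp only [Set.mem_union, Set.mem_inter_iff, Set.mem_diff]
          have := mc s; tauto
      have b3 : R ((S₁ \ T₁) ∪ T₁) = R (S₁ \ T₁) := by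
        refine (norm _ _).symm.trans (hT₁ (S₁ \ T₁) (T₂ ∪ (S₂ \ T₁)) ?_ ?_ ?_ ?_ C f g hfg)
        · refine Set.disjoint_left.2 fun s hs hs' => ?_
          simp only [Set.mem_diff] at hs; tauto
        · refine Set.disjoint_left.2 fun s hs hs' => ?_
          simp only [Set.mem_diff] at hs
          simp only [Set.mem_union, Set.mem_diff] at hs'
          have := m1 s; have := m2 s; tauto
        · refine Set.disjoint_left.2 fun s hs hs' => ?_
          simp only [Set.mem_union, Set.mem_diff] at hs'
          have := m4 s; tauto
        · refine Set.eq_univ_iff_forall.2 fun s => ?_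
          simp only [Set.mem_union, Set.mem_diff]
          have := mc s; tauto
      have e3 : (S₁ ∪ T₂) ∪ (T₁ ∩ S₂) = ((S₁ \ T₁) ∪ T₂) ∪ T₁ := by
        ext s; simp only [Set.mem_union, Set.mem_inter_iff, Set.mem_diff]
        have := mc s; have := m4 s; tauto
      have e4 : (S₁ \ T₁) ∪ T₁ = S₁ ∪ (T₁ ∩ S₂) := by
        ext s; simp only [Set.mem_union, Set.mem_inter_iff, Set.mem_diff]
        have := mc s; have := m4 s; tauto
      calc R (S₁ ∪ T₂) = R ((S₁ ∪ T₂) ∪ (T₁ ∩ S₂)) := b1.symm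
        _ = R (((S₁ \ T₁) ∪ T₂) ∪ T₁) := hRext _ _ e3
        _ = R ((S₁ \ T₁) ∪ T₂) := b4
        _ = R (S₁ \ T₁) := key
        _ = R ((S₁ \ T₁) ∪ T₁) := b3.symm
        _ = R (S₁ ∪ (T₁ ∩ S₂)) := hRext _ _ e4
        _ = R S₁ := b2
    · -- V = T₁ \ (T₁ ∩ S₂) is transferable
      have c1 : R ((S₁ \ T₁) ∪ (T₁ \ (T₁ ∩ S₂))) = R (S₁ \ T₁) := by
        refine (norm _ _).symm.trans (hV (S₁ \ T₁) (T₂ ∪ S₂) ?_ ?_ ?_ ?_ C f g hfg)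
        · refine Set.disjoint_left.2 fun s hs hs' => ?_
          simp only [Set.mem_diff] at hs hs'; tauto
        · refine Set.disjoint_left.2 fun s hs hs' => ?_
          simp only [Set.mem_diff] at hs
          simp only [Set.mem_union] at hs'
          have := m1 s; have := m2 s; tauto
        · refine Set.disjoint_left.2 fun s hs hs' => ?_
          simp only [Set.mem_diff, Set.mem_inter_iff] at hs
          simp only [Set.mem_union] at hs'
          have := m4 s; tauto
        · refine Set.eq_univ_iff_forall.2 fun s => ?_
          simp only [Set.mem_union, Set.mem_diff, Set.mem_inter_iff]
          have := mc s; tauto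
      have c2 : R (((S₁ \ T₁) ∪ T₂) ∪ (T₁ \ (T₁ ∩ S₂))) = R ((S₁ \ T₁) ∪ T₂) := by
        refine (norm _ _).symm.trans (hV ((S₁ \ T₁) ∪ T₂) S₂ ?_ ?_ ?_ ?_ C f g hfg)
        · refine Set.disjoint_left.2 fun s hs hs' => ?_
          simp only [Set.mem_union, Set.mem_diff] at hs
          simp only [Set.mem_diff] at hs'
          have := m4 s; tauto
        · refine Set.disjoint_left.2 fun s hs hs' => ?_
          simp only [Set.mem_union, Set.mem_diff] at hs
          have := m2 s; have := m3 s; tauto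
        · refine Set.disjoint_left.2 fun s hs hs' => ?_
          simp only [Set.mem_diff, Set.mem_inter_iff] at hs; tauto
        · refine Set.eq_univ_iff_forall.2 fun s => ?_
          simp only [Set.mem_union, Set.mem_diff, Set.mem_inter_iff]
          have := mc s; tauto
      have e5 : ((S₁ \ T₁) ∪ T₂) ∪ (T₁ \ (T₁ ∩ S₂)) = S₁ ∪ T₂ := by
        ext s; simp only [Set.mem_union, Set.mem_diff, Set.mem_inter_iff]
        have := mc s; have := m3 s; have := m4 s; tauto
      have e6 : (S₁ \ T₁) ∪ (T₁ \ (T₁ ∩ S₂)) = S₁ := by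
        ext s; simp only [Set.mem_union, Set.mem_diff, Set.mem_inter_iff]
        have := mc s; have := m4 s; tauto
      calc R (S₁ ∪ T₂) = R (((S₁ \ T₁) ∪ T₂) ∪ (T₁ \ (T₁ ∩ S₂))) := (hRext _ _ e5).symm
        _ = R ((S₁ \ T₁) ∪ T₂) := c2
        _ = R (S₁ \ T₁) := key
        _ = R ((S₁ \ T₁) ∪ (T₁ \ (T₁ ∩ S₂))) := c1.symm
        _ = R S₁ := hRext _ _ e6
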